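/- Let H be the n×n matrix with entries H(i,j) = n^{-1}K_{b_n}(t_j−t_i). There exist a constant C > 0, an integer N, and real numbers c_{n,i} such that for all n ≥ N, all indices i with nb_nL ≤ i ≤ n−nb_nL and all j ∈ {1,…,n}, S_d(i,j) = H(i,j)(1 + c_{n,i}), where sup over such i of |c_{n,i}| ≤ C/(nb_n). -/

import Mathlib

open MeasureTheory ProbabilityTheory Filter Matrix

noncomputable section

/-- Design points `t_i = i/n`, `i = 1,…,n` (here `0`-indexed: `dpt n i = (i+1)/n`). -/
def dpt (n : ℕ) (i : Fin n) : ℝ := ((i : ℕ) + 1) / n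

/-- The rescaled kernel `K_b(t) = K(t/b)/b`. -/
def scaledKer (K : ℝ → ℝ) (b t : ℝ) : ℝ := K (t / b) / b

/-- The `2 × 2` matrix `X(t_i)ᵀ W(t_i) X(t_i)` of local linear regression. -/
def locMat (K : ℝ → ℝ) (b : ℝ) (n : ℕ) (i : Fin n) : Matrix (Fin 2) (Fin 2) ℝ :=
  Matrix.of fun a c =>
    ∑ j : Fin n, scaledKer K b (dpt n j - dpt n i) * (dpt n j - dpt n i) ^ ((a : ℕ) + (c : ℕ))

/-- The local linear smoothing matrix `S_d`:
`S_d(i,j) = (1,0){X(tᵢ)ᵀW(tᵢ)X(tᵢ)}⁻¹(1, tⱼ-tᵢ)ᵀ K_b(tⱼ-tᵢ)`. -/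
def smoothMat (K : ℝ → ℝ) (b : ℝ) (n : ℕ) : Matrix (Fin n) (Fin n) ℝ :=
  Matrix.of fun i j =>
    ((locMat K b n i)⁻¹ *ᵥ ![1, dpt n j - dpt n i]) 0 * scaledKer K b (dpt n j - dpt n i)


lemma ker_zero_of_ge {K : ℝ → ℝ} {L : ℝ} (hL : 0 < L) {CK : NNReal}
    (hK_lip : LipschitzWith CK K) (hK_supp : ∀ t, L < |t| → K t = 0) :
    ∀ t, L ≤ |t| → K t = 0 := by
  have key : ∀ t, |t| = L → K t = 0 := by
    intro t ht
    have habs : ∀ ε : ℝ, 0 < ε → |K t| ≤ CK * ε := by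
      intro ε hε
      set t' := if 0 ≤ t then t + ε else t - ε with ht'
      have h1 : L < |t'| := by
        rw [ht']; split_ifs with h0
        · rw [abs_of_nonneg h0] at ht
          rw [abs_of_nonneg (by linarith)]; linarith
        · push_neg at h0
          rw [abs_of_neg h0] at ht
          rw [abs_of_neg (by linarith)]; linarith
      have h2 : K t' = 0 := hK_supp t' h1
      have h3 := hK_lip.dist_le_mul t t'
      rw [Real.dist_eq, Real.dist_eq, h2, sub_zero] at h3
      have h4 : |t - t'| = ε := by
        rw [ht']; split_ifs with h0
        · rw [show t - (t + ε) = -ε by ring, abs_neg, abs_of_nonneg hε.le]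
        · rw [show t - (t - ε) = ε by ring, abs_of_nonneg hε.le]
      rw [h4] at h3; exact h3
    have : |K t| ≤ 0 := by
      by_contra hc
      push_neg at hc
      have hq := habs (|K t| / (2 * ((CK : ℝ) + 1))) (by positivity)
      have hck : (0:ℝ) ≤ CK := CK.coe_nonneg
      have : (CK:ℝ) * (|K t| / (2 * ((CK : ℝ) + 1))) ≤ |K t| / 2 := by
        rw [mul_div_assoc', div_le_div_iff₀ (by positivity) (by norm_num)]
        nlinarith [mul_nonneg hck hc.le]
      linarith
    have := abs_nonneg (K t)
    have : |K t| = 0 := le_antisymm ‹|K t| ≤ 0› (abs_nonneg _)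
    exact abs_eq_zero.mp this
  intro t ht
  rcases lt_or_eq_of_le ht with h | h
  · exact hK_supp t h
  · exact key t h.symm


lemma dpt_sub (n : ℕ) (i j : Fin n) :
    dpt n j - dpt n i = (((j:ℕ):ℝ) - ((i:ℕ):ℝ)) / n := by
  unfold dpt; rw [div_sub_div_same]; ring_nf

lemma sum_odd_zero (K : ℝ → ℝ) (L : ℝ) (hL : 0 < L) (hK_symm : ∀ t, K (-t) = K t)
    (hK_ge : ∀ t, L ≤ |t| → K t = 0)
    (n : ℕ) (b : ℝ) (hb : 0 < b) (i : Fin n)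
    (h1 : (n:ℝ) * b * L ≤ ((i:ℕ):ℝ) + 1) (h2 : ((i:ℕ):ℝ) + 1 ≤ (n:ℝ) - (n:ℝ)*b*L) :
    ∑ j : Fin n, scaledKer K b (dpt n j - dpt n i) * (dpt n j - dpt n i) = 0 := by
  have hn : 0 < n := i.pos
  have hnR : (0:ℝ) < n := by exact_mod_cast hn
  set F : ℝ → ℝ := fun x => scaledKer K b x * x with hF
  have hFodd : ∀ x, F (-x) = - F x := by
    intro x; simp only [hF, scaledKer]
    rw [neg_div, hK_symm]; ring
  have hF0 : F 0 = 0 := by simp [hF]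
  have hvan : ∀ j : Fin n, F (dpt n j - dpt n i) ≠ 0 →
      ((j:ℕ) ≤ 2*(i:ℕ) ∧ 2*(i:ℕ) - (j:ℕ) < n) := by
    intro j hFj
    have hK0 : K ((dpt n j - dpt n i)/b) ≠ 0 := by
      intro h
      apply hFj; simp only [hF, scaledKer, h, zero_div, zero_mul]
    have habs : |(dpt n j - dpt n i)/b| < L := by
      by_contra hcon; push_neg at hcon; exact hK0 (hK_ge _ hcon)
    rw [dpt_sub] at habs
    have hbn : (0:ℝ) < n * b := by positivity
    rw [div_div, abs_div, abs_of_pos hbn, div_lt_iff₀ hbn] at habs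
    rw [abs_sub_lt_iff] at habs
    have hj1 : ((j:ℕ):ℝ) - i < n*b*L := by nlinarith [habs.1]
    have hj2 : ((i:ℕ):ℝ) - j < n*b*L := by nlinarith [habs.2]
    constructor
    · have hr : ((j:ℕ):ℝ) < 2*(i:ℕ) + 1 := by linarith
      have : (j:ℕ) < 2*(i:ℕ) + 1 := by exact_mod_cast hr
      omega
    · have hr : (2*(i:ℕ):ℝ) < (j:ℕ) + n := by push_cast; linarith
      have : 2*(i:ℕ) < (j:ℕ) + n := by exact_mod_cast hr
      omega
  set σ : Fin n → Fin n := fun j =>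
    if h : (j:ℕ) ≤ 2*(i:ℕ) ∧ 2*(i:ℕ) - (j:ℕ) < n then ⟨2*(i:ℕ) - (j:ℕ), h.2⟩ else j
    with hσ
  have hσσ : Function.Involutive σ := by
    intro j
    have hjlt := j.isLt
    by_cases h : (j:ℕ) ≤ 2*(i:ℕ) ∧ 2*(i:ℕ) - (j:ℕ) < n
    · rw [hσ]; simp only [dif_pos h]
      rw [dif_pos (show (((⟨2*(i:ℕ) - (j:ℕ), h.2⟩ : Fin n) : ℕ)) ≤ 2*(i:ℕ) ∧
          2*(i:ℕ) - ((⟨2*(i:ℕ) - (j:ℕ), h.2⟩ : Fin n) : ℕ) < n from by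
        simp only [Fin.val_mk]; omega)]
      ext; simp only [Fin.val_mk]; omega
    · rw [hσ]; simp only [dif_neg h]
  have hkey : ∀ j, F (dpt n (σ j) - dpt n i) = - F (dpt n j - dpt n i) := by
    intro j
    by_cases h : (j:ℕ) ≤ 2*(i:ℕ) ∧ 2*(i:ℕ) - (j:ℕ) < n
    · have hσj : σ j = ⟨2*(i:ℕ) - (j:ℕ), h.2⟩ := dif_pos h
      rw [hσj, dpt_sub, dpt_sub]
      have hcast : (((2*(i:ℕ) - (j:ℕ) : ℕ)):ℝ) = 2*((i:ℕ):ℝ) - ((j:ℕ):ℝ) := by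
        push_cast [h.1]; ring
      simp only [Fin.val_mk, hcast]
      rw [show (2*((i:ℕ):ℝ) - ((j:ℕ):ℝ) - ((i:ℕ):ℝ))/n
            = -((((j:ℕ):ℝ) - ((i:ℕ):ℝ))/n) by ring]
      exact hFodd _
    · have hσj : σ j = j := dif_neg h
      rw [hσj]
      have h0 : F (dpt n j - dpt n i) = 0 := by
        by_contra hc; exact h (hvan j hc)
      rw [h0]; norm_num
  have hsum := Equiv.sum_comp (Function.Involutive.toPerm σ hσσ)
      (fun j => F (dpt n j - dpt n i))
  have h2' : ∑ j : Fin n, F (dpt n j - dpt n i)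
      = - ∑ j : Fin n, F (dpt n j - dpt n i) := by
    conv_lhs => rw [← hsum]
    have : ∀ j : Fin n, F (dpt n ((Function.Involutive.toPerm σ hσσ) j) - dpt n i)
        = - F (dpt n j - dpt n i) := fun j => hkey j
    rw [Finset.sum_congr rfl (fun j _ => this j), Finset.sum_neg_distrib]
  have : ∑ j : Fin n, F (dpt n j - dpt n i) = 0 := by linarith
  simpa [hF] using this


lemma riemann_est (K : ℝ → ℝ) (L : ℝ) (hL : 0 < L) (CK : NNReal)
    (hK_lip : LipschitzWith CK K)
    (hK_supp : ∀ t, L < |t| → K t = 0) (hK_ge : ∀ t, L ≤ |t| → K t = 0)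
    (hK_int : ∫ t, K t = 1)
    (n : ℕ) (b : ℝ) (hb : 0 < b) (hν : 1 ≤ (n:ℝ) * b) (i : Fin n)
    (h1 : (n:ℝ) * b * L ≤ ((i:ℕ):ℝ) + 1) (h2 : ((i:ℕ):ℝ) + 1 ≤ (n:ℝ) - (n:ℝ)*b*L) :
    |(∑ j : Fin n, K ((((j:ℕ):ℝ) - ((i:ℕ):ℝ)) / ((n:ℝ) * b))) / ((n:ℝ)*b) - 1|
      ≤ ((CK:ℝ) * (2*L+3)) / ((n:ℝ) * b) := by
  set ν := (n:ℝ)*b with hνdef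
  have hν0 : (0:ℝ) < ν := lt_of_lt_of_le one_pos hν
  set M := ⌈ν*L⌉₊ with hM
  have hMge : ν*L ≤ M := Nat.le_ceil _
  have hMle : (M:ℝ) ≤ ν*L + 1 := (Nat.ceil_lt_add_one (by positivity)).le
  have hcont : Continuous K := hK_lip.continuous
  have hνL : ν*L ≤ ((i:ℕ):ℝ) + 1 := by rw [hνdef]; nlinarith
  have hνU : ((i:ℕ):ℝ) + 1 ≤ (n:ℝ) - ν*L := by rw [hνdef]; nlinarith
  set a : ℕ → ℝ := fun k => ((k:ℝ) - M - 1/2)/ν with ha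
  have hstep : ∀ k : ℕ, a (k+1) - a k = 1/ν := by
    intro k; rw [ha]; simp only; rw [div_sub_div_same]; push_cast; ring_nf
  have hmono : ∀ k l : ℕ, k ≤ l → a k ≤ a l := by
    intro k l h; rw [ha]; simp only
    have : ((k:ℝ)) ≤ l := by exact_mod_cast h
    gcongr
  have hii : ∀ (u v : ℝ), IntervalIntegrable K volume u v :=
    fun u v => hcont.intervalIntegrable u v
  -- Step 1: total integral
  have ha0 : a 0 ≤ -L := by
    rw [ha]; simp only; rw [div_le_iff₀ hν0]; push_cast; nlinarith
  have ha1 : L ≤ a (2*M+1) := by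
    rw [ha]; simp only; rw [le_div_iff₀ hν0]; push_cast; nlinarith
  have hsupp' : ∀ x, x ∉ Set.Ioc (a 0) (a (2*M+1)) → K x = 0 := by
    intro x hx
    apply hK_ge
    rw [Set.mem_Ioc, not_and_or, not_lt, not_le] at hx
    rcases hx with h' | h'
    · rw [le_abs]; right; linarith
    · rw [le_abs]; left; linarith
  have hint1 : ∫ x in (a 0)..(a (2*M+1)), K x = 1 := by
    rw [intervalIntegral.integral_of_le (hmono 0 (2*M+1) (by omega))]
    rw [setIntegral_eq_integral_of_forall_compl_eq_zero hsupp']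
    exact hK_int
  have hadj : ∑ k ∈ Finset.range (2*M+1), ∫ x in (a k)..(a (k+1)), K x
      = ∫ x in (a 0)..(a (2*M+1)), K x :=
    intervalIntegral.sum_integral_adjacent_intervals (fun k _ => hii _ _)
  -- per-interval bound
  have hper : ∀ k : ℕ, |(∫ x in (a k)..(a (k+1)), K x) - K (((k:ℝ) - M)/ν) * (1/ν)|
      ≤ (CK:ℝ) * (1/ν)^2 := by
    intro k
    have hconst : K (((k:ℝ)-M)/ν) * (1/ν) = ∫ x in (a k)..(a (k+1)), K (((k:ℝ)-M)/ν) := by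
      rw [intervalIntegral.integral_const, hstep k, smul_eq_mul, mul_comm]
    rw [hconst, ← intervalIntegral.integral_sub (hii _ _) (intervalIntegrable_const)]
    have hmid : a k = ((k:ℝ)-M)/ν - (1/ν)/2 := by
      rw [ha]; simp only; field_simp
    have hb1 : ∀ x ∈ Set.uIoc (a k) (a (k+1)), ‖K x - K (((k:ℝ)-M)/ν)‖ ≤ (CK:ℝ) * (1/ν) := by
      intro x hx
      rw [Set.uIoc_of_le (hmono k (k+1) (by omega))] at hx
      obtain ⟨hx1, hx2⟩ := hx
      have hx2' : x ≤ a k + 1/ν := by rw [← hstep k] at *; linarith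
      have habs : |x - ((k:ℝ)-M)/ν| ≤ 1/ν := by
        rw [abs_le]
        have h1ν : 0 < 1/ν := by positivity
        constructor <;> [linarith [hx1, hmid]; linarith [hx2', hmid]]
      calc ‖K x - K (((k:ℝ)-M)/ν)‖ = dist (K x) (K (((k:ℝ)-M)/ν)) := by
            rw [Real.dist_eq, Real.norm_eq_abs]
        _ ≤ (CK:ℝ) * dist x (((k:ℝ)-M)/ν) := hK_lip.dist_le_mul _ _
        _ = (CK:ℝ) * |x - ((k:ℝ)-M)/ν| := by rw [Real.dist_eq]
        _ ≤ (CK:ℝ) * (1/ν) := by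
            exact mul_le_mul_of_nonneg_left habs CK.coe_nonneg
    have hnorm := intervalIntegral.norm_integral_le_of_norm_le_const hb1
    rw [Real.norm_eq_abs] at hnorm
    have habs2 : |a (k+1) - a k| = 1/ν := by
      rw [hstep k]; exact abs_of_pos (by positivity)
    calc |∫ x in (a k)..(a (k+1)), (K x - K (((k:ℝ)-M)/ν))|
        ≤ (CK:ℝ) * (1/ν) * |a (k+1) - a k| := hnorm
      _ = (CK:ℝ) * (1/ν)^2 := by rw [habs2]; ring
  -- sum bound
  have hsum1 : |1 - (∑ k ∈ Finset.range (2*M+1), K (((k:ℝ)-M)/ν)) * (1/ν)|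
      ≤ (2*M+1 : ℕ) * ((CK:ℝ) * (1/ν)^2) := by
    have hone : ∑ k ∈ Finset.range (2*M+1), ∫ x in (a k)..(a (k+1)), K x = 1 := by
      rw [hadj]; exact hint1
    have hsplit : 1 - (∑ k ∈ Finset.range (2*M+1), K (((k:ℝ)-M)/ν)) * (1/ν)
        = ∑ k ∈ Finset.range (2*M+1),
            ((∫ x in (a k)..(a (k+1)), K x) - K (((k:ℝ)-M)/ν) * (1/ν)) := by
      rw [Finset.sum_sub_distrib, hone, ← Finset.sum_mul]
    rw [hsplit]
    calc |∑ k ∈ Finset.range (2*M+1),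
          ((∫ x in (a k)..(a (k+1)), K x) - K (((k:ℝ)-M)/ν) * (1/ν))|
        ≤ ∑ k ∈ Finset.range (2*M+1),
          |(∫ x in (a k)..(a (k+1)), K x) - K (((k:ℝ)-M)/ν) * (1/ν)| :=
          Finset.abs_sum_le_sum_abs _ _
      _ ≤ ∑ _k ∈ Finset.range (2*M+1), (CK:ℝ) * (1/ν)^2 :=
          Finset.sum_le_sum (fun k _ => hper k)
      _ = (2*M+1 : ℕ) * ((CK:ℝ) * (1/ν)^2) := by
          rw [Finset.sum_const, Finset.card_range, nsmul_eq_mul]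
  -- reindexing
  set Fn : ℕ → ℝ := fun k => K (((k:ℝ) - M - i)/ν) with hFn
  have hA : ∑ k ∈ Finset.range (2*M+1), K (((k:ℝ)-M)/ν)
      = ∑ k ∈ Finset.Ico (i:ℕ) ((i:ℕ)+(2*M+1)), Fn k := by
    rw [Finset.sum_Ico_eq_sum_range]
    rw [show (i:ℕ)+(2*M+1) - (i:ℕ) = 2*M+1 by omega]
    apply Finset.sum_congr rfl
    intro k _
    simp only [hFn]; congr 1; push_cast; ring
  have hB : ∑ j : Fin n, K ((((j:ℕ):ℝ) - ((i:ℕ):ℝ))/ν)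
      = ∑ k ∈ Finset.Ico M (M+n), Fn k := by
    rw [Finset.sum_Ico_eq_sum_range]
    rw [show M + n - M = n by omega]
    rw [Fin.sum_univ_eq_sum_range (fun j => K ((((j:ℕ):ℝ) - ((i:ℕ):ℝ))/ν)) n]
    apply Finset.sum_congr rfl
    intro k _
    simp only [hFn]; congr 1; push_cast; ring
  have hAext : ∑ k ∈ Finset.Ico (i:ℕ) ((i:ℕ)+(2*M+1)), Fn k
      = ∑ k ∈ Finset.range (n+(2*M+1)), Fn k := by
    apply Finset.sum_subset
    · intro k hk
      rw [Finset.mem_Ico] at hk; rw [Finset.mem_range]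
      have := i.isLt; omega
    · intro k _ hk2
      rw [Finset.mem_Ico, not_and_or, not_le, not_lt] at hk2
      simp only [hFn]
      apply hK_supp
      rcases hk2 with h' | h'
      · -- k < i
        have hkr : ((k:ℝ)) + 1 ≤ (i:ℕ) := by exact_mod_cast h'
        rw [lt_abs]; right
        rw [← neg_div, lt_div_iff₀ hν0]
        linarith [hMge, hkr]
      · -- k ≥ i + 2M+1
        have hkr : ((i:ℕ):ℝ) + 2*M+1 ≤ k := by push_cast; exact_mod_cast h'
        rw [lt_abs]; left
        rw [lt_div_iff₀ hν0]
        linarith [hMge, hkr]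
  have hBext : ∑ k ∈ Finset.Ico M (M+n), Fn k
      = ∑ k ∈ Finset.range (n+(2*M+1)), Fn k := by
    apply Finset.sum_subset
    · intro k hk
      rw [Finset.mem_Ico] at hk; rw [Finset.mem_range]; omega
    · intro k _ hk2
      rw [Finset.mem_Ico, not_and_or, not_le, not_lt] at hk2
      simp only [hFn]
      apply hK_ge
      rcases hk2 with h' | h'
      · -- k < M
        have hkr : ((k:ℝ)) + 1 ≤ M := by exact_mod_cast h'
        rw [le_abs]; right
        rw [← neg_div, le_div_iff₀ hν0]
        linarith [hνL, hkr]
      · -- k ≥ M + n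
        have hkr : ((M:ℝ)) + n ≤ k := by exact_mod_cast h'
        rw [le_abs]; left
        rw [le_div_iff₀ hν0]
        linarith [hνU, hkr]
  have hAB : ∑ j : Fin n, K ((((j:ℕ):ℝ) - ((i:ℕ):ℝ))/ν)
      = ∑ k ∈ Finset.range (2*M+1), K (((k:ℝ)-M)/ν) := by
    rw [hA, hB, hAext, hBext]
  rw [hAB]
  have hfinal : ((2*M+1 : ℕ):ℝ) * ((CK:ℝ) * (1/ν)^2) ≤ (CK:ℝ)*(2*L+3)/ν := by
    have h2M : ((2*M+1:ℕ):ℝ) ≤ (2*L+3)*ν := by push_cast; nlinarith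
    have hck : (0:ℝ) ≤ CK := CK.coe_nonneg
    rw [div_eq_mul_inv]
    have hinv : (0:ℝ) < ν⁻¹ := by positivity
    calc ((2*M+1 : ℕ):ℝ) * ((CK:ℝ) * (1/ν)^2)
        = ((2*M+1 : ℕ):ℝ) * (CK:ℝ) * ν⁻¹ * ν⁻¹ := by rw [one_div]; ring
      _ ≤ ((2*L+3)*ν) * (CK:ℝ) * ν⁻¹ * ν⁻¹ := by
          gcongr
      _ = (CK:ℝ)*(2*L+3) * (ν * ν⁻¹) * ν⁻¹ := by ring
      _ = (CK:ℝ)*(2*L+3) * ν⁻¹ := by rw [mul_inv_cancel₀ (ne_of_gt hν0), mul_one]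
  calc |(∑ k ∈ Finset.range (2*M+1), K (((k:ℝ)-M)/ν))/ν - 1|
      = |1 - (∑ k ∈ Finset.range (2*M+1), K (((k:ℝ)-M)/ν)) * (1/ν)| := by
        rw [abs_sub_comm, div_eq_mul_inv, one_div]
    _ ≤ (2*M+1 : ℕ) * ((CK:ℝ) * (1/ν)^2) := hsum1
    _ ≤ (CK:ℝ)*(2*L+3)/ν := hfinal


lemma pos_interval (K : ℝ → ℝ) (L : ℝ) (hL : 0 < L) (hK_symm : ∀ t, K (-t) = K t)
    (CK : NNReal) (hK_lip : LipschitzWith CK K)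
    (hK_nonneg : ∀ t, 0 ≤ K t) (hK_ge : ∀ t, L ≤ |t| → K t = 0)
    (hK_int : ∫ t, K t = 1) :
    ∃ p r κ : ℝ, 0 < r ∧ 0 < κ ∧ 0 < p - r ∧ p + r < L ∧
      ∀ x, p - r ≤ x → x ≤ p + r → κ ≤ K x := by
  -- get a point of positivity
  have hx0 : ∃ x0, 0 ≤ x0 ∧ 0 < K x0 := by
    by_contra hc
    push_neg at hc
    have hzero : ∀ x, K x = 0 := by
      intro x
      rcases le_or_gt 0 x with h | h
      · exact le_antisymm (hc x h) (hK_nonneg x)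
      · rw [← hK_symm]; exact le_antisymm (hc (-x) (by linarith)) (hK_nonneg _)
    rw [show K = fun _ => (0:ℝ) from funext hzero] at hK_int
    simp at hK_int
  obtain ⟨x0, hx0n, hx0p⟩ := hx0
  have hx0L : x0 < L := by
    by_contra hcon
    push_neg at hcon
    rw [hK_ge x0 (by rw [abs_of_nonneg hx0n]; exact hcon)] at hx0p
    exact lt_irrefl 0 hx0p
  set d := min (K x0 / (2*((CK:ℝ)+1))) ((L - x0)/2) with hd
  have hd0 : 0 < d := by
    apply lt_min
    · positivity
    · linarith
  have hck : (0:ℝ) ≤ CK := CK.coe_nonneg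
  have hdK : (CK:ℝ) * d ≤ K x0 / 2 := by
    have h1 : d ≤ K x0 / (2*((CK:ℝ)+1)) := min_le_left _ _
    have h2 : (CK:ℝ) * d ≤ (CK:ℝ) * (K x0 / (2*((CK:ℝ)+1))) :=
      mul_le_mul_of_nonneg_left h1 hck
    have h3 : (CK:ℝ) * (K x0 / (2*((CK:ℝ)+1))) ≤ K x0 / 2 := by
      rw [mul_div_assoc', div_le_div_iff₀ (by positivity) (by norm_num)]
      nlinarith [mul_nonneg hck hx0p.le]
    linarith
  have hdL : d ≤ (L - x0)/2 := min_le_right _ _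
  refine ⟨x0 + d/2, d/4, K x0 / 2, by positivity, by positivity, by linarith, by linarith, ?_⟩
  intro x hx1 hx2
  have hdist : |x - x0| ≤ d := by
    rw [abs_le]; constructor <;> linarith
  have := hK_lip.dist_le_mul x x0
  rw [Real.dist_eq, Real.dist_eq] at this
  have habs : |K x - K x0| ≤ (CK:ℝ) * d :=
    le_trans this (mul_le_mul_of_nonneg_left hdist hck)
  rw [abs_le] at habs
  linarith [habs.1]

lemma S2_pos (K : ℝ → ℝ) (L : ℝ) (hL : 0 < L)
    (hK_nonneg : ∀ t, 0 ≤ K t)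
    (p r κ : ℝ) (hr : 0 < r) (hκ : 0 < κ) (hpr : 0 < p - r) (hprL : p + r < L)
    (hKpos : ∀ x, p - r ≤ x → x ≤ p + r → κ ≤ K x)
    (n : ℕ) (b : ℝ) (hb : 0 < b) (hν : 1 ≤ (n:ℝ) * b) (hνr : 1 ≤ r * ((n:ℝ)*b))
    (i : Fin n)
    (h2 : ((i:ℕ):ℝ) + 1 ≤ (n:ℝ) - (n:ℝ)*b*L) :
    0 < ∑ j : Fin n, scaledKer K b (dpt n j - dpt n i) * (dpt n j - dpt n i)^2 := by
  have hn : 0 < n := i.pos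
  have hnR : (0:ℝ) < n := by exact_mod_cast hn
  set ν := (n:ℝ)*b with hν'
  have hν0 : (0:ℝ) < ν := lt_of_lt_of_le one_pos hν
  set k₀ := ⌈p * ν⌉₊ with hk₀
  have hk₀ge : p * ν ≤ k₀ := Nat.le_ceil _
  have hk₀le : (k₀:ℝ) ≤ p*ν + 1 := (Nat.ceil_lt_add_one (by nlinarith)).le
  have hp0 : 0 < p := by linarith
  have hk₀pos : 0 < k₀ := by
    rw [hk₀, Nat.lt_ceil]; push_cast; nlinarith
  -- the index j₀ = i + k₀ is valid
  have hik : (i:ℕ) + k₀ < n := by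
    have hr1 : (k₀:ℝ) ≤ p*ν + 1 := hk₀le
    have : ((i:ℕ):ℝ) + k₀ + 1 < n := by nlinarith
    have h' : ((i:ℕ):ℝ) + k₀ < n := by linarith
    exact_mod_cast (by push_cast; exact h' : (((i:ℕ) + k₀ : ℕ):ℝ) < (n:ℝ))
  set j₀ : Fin n := ⟨(i:ℕ) + k₀, hik⟩ with hj₀
  have hνb : (0:ℝ) < b := hb
  have hterm : 0 < scaledKer K b (dpt n j₀ - dpt n i) * (dpt n j₀ - dpt n i)^2 := by
    have hdj : dpt n j₀ - dpt n i = (k₀:ℝ)/n := by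
      unfold dpt; rw [hj₀, div_sub_div_same]; push_cast; ring_nf
    have harg : (dpt n j₀ - dpt n i)/b = (k₀:ℝ)/ν := by
      rw [hdj, div_div, hν']
    have hargl : p ≤ (k₀:ℝ)/ν := by rw [le_div_iff₀ hν0]; linarith
    have hargu : (k₀:ℝ)/ν ≤ p + r := by
      rw [div_le_iff₀ hν0]; nlinarith
    have hKb : κ ≤ K ((dpt n j₀ - dpt n i)/b) := by
      rw [harg]; exact hKpos _ (by linarith) hargu
    have h1 : 0 < scaledKer K b (dpt n j₀ - dpt n i) := by
      unfold scaledKer; apply div_pos (lt_of_lt_of_le hκ hKb) hb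
    have h2' : 0 < (dpt n j₀ - dpt n i)^2 := by
      rw [hdj]; positivity
    exact mul_pos h1 h2'
  apply Finset.sum_pos'
  · intro j _
    apply mul_nonneg
    · unfold scaledKer; exact div_nonneg (hK_nonneg _) hb.le
    · positivity
  · exact ⟨j₀, Finset.mem_univ _, hterm⟩


theorem statement10 (K : ℝ → ℝ) (L : ℝ) (hL : 0 < L)
    (hK_symm : ∀ t, K (-t) = K t) (CK : NNReal) (hK_lip : LipschitzWith CK K)
    (CB : ℝ) (hK_bdd : ∀ t, K t ≤ CB)
    (hK_nonneg : ∀ t, 0 ≤ K t) (hK_supp : ∀ t, L < |t| → K t = 0)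
    (hK_int : ∫ t, K t = 1)
    (b : ℕ → ℝ) (hb_pos : ∀ n, 0 < b n)
    (hb_lim : Tendsto b atTop (nhds 0))
    (hnb_lim : Tendsto (fun n : ℕ => (n : ℝ) * b n) atTop atTop) :
    ∃ C > (0 : ℝ), ∃ N : ℕ, ∀ n ≥ N, ∃ c : Fin n → ℝ,
      ∀ i : Fin n, (n : ℝ) * b n * L ≤ ((i : ℕ) : ℝ) + 1 →
        ((i : ℕ) : ℝ) + 1 ≤ (n : ℝ) - (n : ℝ) * b n * L →
        |c i| ≤ C / ((n : ℝ) * b n) ∧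
        ∀ j : Fin n,
          smoothMat K (b n) n i j =
            (n : ℝ)⁻¹ * scaledKer K (b n) (dpt n j - dpt n i) * (1 + c i) := by
  
  classical
  have hK_ge : ∀ t, L ≤ |t| → K t = 0 := ker_zero_of_ge hL hK_lip hK_supp
  obtain ⟨p, r, κ, hr, hκ, hpr, hprL, hKpos⟩ :=
    pos_interval K L hL hK_symm CK hK_lip hK_nonneg hK_ge hK_int
  set C1 : ℝ := (CK:ℝ) * (2*L+3) + 1 with hC1
  have hC1pos : 0 < C1 := by positivity
  refine ⟨2*C1, by positivity, ?_⟩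
  have hev : ∀ᶠ n : ℕ in atTop, (n:ℝ) * b n ≥ max (max 1 (2*C1)) (1/r) :=
    hnb_lim.eventually_ge_atTop _
  rw [eventually_atTop] at hev
  obtain ⟨N, hN⟩ := hev
  refine ⟨N, fun n hn => ?_⟩
  have hbn : 0 < b n := hb_pos n
  set ν := (n:ℝ) * b n with hν
  have hν1 : 1 ≤ ν := le_trans (le_trans (le_max_left _ _) (le_max_left _ _)) (hN n hn)
  have hνC : 2*C1 ≤ ν := le_trans (le_trans (le_max_right _ _) (le_max_left _ _)) (hN n hn)
  have hνr : 1/r ≤ ν := le_trans (le_max_right _ _) (hN n hn)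
  have hν0 : (0:ℝ) < ν := lt_of_lt_of_le one_pos hν1
  have hrν : 1 ≤ r * ν := by
    rw [div_le_iff₀ hr] at hνr
    nlinarith
  refine ⟨fun i => (n:ℝ) / (∑ j, scaledKer K (b n) (dpt n j - dpt n i)) - 1, ?_⟩
  intro i hi1 hi2
  have hn0 : 0 < n := i.pos
  have hnR : (0:ℝ) < n := by exact_mod_cast hn0
  set S0 := ∑ j : Fin n, scaledKer K (b n) (dpt n j - dpt n i) with hS0def
  set S2 := ∑ j : Fin n, scaledKer K (b n) (dpt n j - dpt n i) * (dpt n j - dpt n i)^2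
    with hS2def
  have hS0T : S0 / (n:ℝ)
      = (∑ j : Fin n, K ((((j:ℕ):ℝ) - ((i:ℕ):ℝ)) / ((n:ℝ) * b n))) / ((n:ℝ) * b n) := by
    rw [hS0def, Finset.sum_div, Finset.sum_div]
    apply Finset.sum_congr rfl
    intro j _
    rw [scaledKer, dpt_sub, div_div, div_div, mul_comm (b n) ((n:ℝ))]
  have hriem := riemann_est K L hL CK hK_lip hK_supp hK_ge hK_int n (b n) hbn
    (by rw [← hν]; exact hν1) i hi1 hi2
  have hS0n : |S0/(n:ℝ) - 1| ≤ C1/ν := by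
    rw [hS0T]
    refine le_trans hriem ?_
    rw [← hν]
    gcongr
    rw [hC1]; linarith
  have habs1 : |1 - S0/(n:ℝ)| ≤ C1/ν := by rw [abs_sub_comm]; exact hS0n
  have hS0half : (n:ℝ)/2 ≤ S0 := by
    have h1' : 1 - C1/ν ≤ S0/n := by
      have := abs_le.mp hS0n; linarith [this.1]
    have h2' : C1/ν ≤ 1/2 := by
      rw [div_le_iff₀ hν0]; linarith
    have h3' : 1/2 ≤ S0/(n:ℝ) := by linarith
    calc (n:ℝ)/2 = n * (1/2) := by ring
      _ ≤ n * (S0/n) := mul_le_mul_of_nonneg_left h3' hnR.le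
      _ = S0 := by field_simp
  have hS0pos : 0 < S0 := lt_of_lt_of_le (by positivity) hS0half
  have hS0ne : S0 ≠ 0 := ne_of_gt hS0pos
  have hci : |(n:ℝ)/S0 - 1| ≤ 2*C1/ν := by
    have hfact : (n:ℝ)/S0 - 1 = ((n:ℝ)/S0) * (1 - S0/n) := by field_simp
    rw [hfact, abs_mul]
    have h2a : |(n:ℝ)/S0| ≤ 2 := by
      rw [abs_of_pos (by positivity), div_le_iff₀ hS0pos]; linarith
    calc |(n:ℝ)/S0| * |1 - S0/(n:ℝ)| ≤ 2 * (C1/ν) :=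
        mul_le_mul h2a habs1 (abs_nonneg _) (by norm_num)
      _ = 2*C1/ν := by ring
  constructor
  · exact hci
  · intro j
    have hS1 := sum_odd_zero K L hL hK_symm hK_ge n (b n) hbn i hi1 hi2
    have hS2pos := S2_pos K L hL hK_nonneg p r κ hr hκ hpr hprL hKpos n (b n) hbn
      (by rw [← hν]; exact hν1) (by rw [← hν]; exact hrν) i hi2
    have hS2ne : S2 ≠ 0 := ne_of_gt hS2pos
    have hloc : locMat K (b n) n i = !![S0, 0; 0, S2] := by
      ext a c
      fin_cases a <;> fin_cases c <;>
        simp [locMat, pow_one, pow_zero, mul_one, hS1, hS0def, hS2def]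
    have hinv : (locMat K (b n) n i)⁻¹ = !![S0⁻¹, 0; 0, S2⁻¹] := by
      rw [hloc]; apply Matrix.inv_eq_right_inv
      ext a c
      fin_cases a <;> fin_cases c <;>
        simp [Matrix.mul_apply, Fin.sum_univ_two] <;> field_simp
    have hsm : smoothMat K (b n) n i j
        = S0⁻¹ * scaledKer K (b n) (dpt n j - dpt n i) := by
      show ((locMat K (b n) n i)⁻¹ *ᵥ ![1, dpt n j - dpt n i]) 0
          * scaledKer K (b n) (dpt n j - dpt n i)
        = S0⁻¹ * scaledKer K (b n) (dpt n j - dpt n i)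
      rw [hinv]
      congr 1
      simp [Matrix.mulVec, dotProduct, Fin.sum_univ_two]
    rw [hsm]
    show _ = _ * _ * (1 + ((n:ℝ) / S0 - 1))
    field_simp
    ring
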